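/- Let (𝔪, ε) be a nonempty signed symmetric multisegment in the good-parity setting, with initial sequence Δ₁ ⪰ … ⪰ Δ_l, and with 𝔪# nonempty. Assume e(Δ₁) = e(Δ'₁). Suppose there exists j ≥ 1 such that j ≤ l, j < l', c(Δ_j) = 0, and Δ'_i ⪯ Δ_i for all i ≤ j. Then c(Δ'_{j+1}) ≠ 0. -/
import Mathlib


namespace AZ

/-- A segment in doubled coordinates: the pair `(a, b)` represents the segment
`[a/2, b/2]` whose endpoints lie in `(1/2)ℤ`.  Thus the end `e(Δ)` is `Δ.2 / 2`,
the beginning `b(Δ)` is `Δ.1 / 2`, `Δ` is centered iff `Δ.1 + Δ.2 = 0`, and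
`c(Δ) = 1/2` iff `Δ.1 + Δ.2 = 2`. -/
abbrev Seg := ℤ × ℤ

namespace Seg

/-- Well-formedness of a segment: `a ≤ b` and `a ≡ b [ZMOD 2]`, i.e. `b - a ∈ 2ℕ`. -/
def WF (Δ : Seg) : Prop := Δ.1 ≤ Δ.2 ∧ Δ.1 % 2 = Δ.2 % 2

/-- The dual (contragredient) segment `Δ∨ = [−b, −a]`. -/
def dual (Δ : Seg) : Seg := (-Δ.2, -Δ.1)

/-- `Δ⁻` : the segment with its end removed. -/
def trimEnd (Δ : Seg) : Seg := (Δ.1, Δ.2 - 2)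

/-- `⁻Δ` : the segment with its beginning removed. -/
def trimBeg (Δ : Seg) : Seg := (Δ.1 + 2, Δ.2)

/-- `⁺Δ` : the segment with its beginning extended. -/
def extBeg (Δ : Seg) : Seg := (Δ.1 - 2, Δ.2)

/-- The order on segments: `[x₁,y₁] ≤ [x₂,y₂]` iff `x₁ < x₂`, or `x₁ = x₂` and `y₁ ≥ y₂`. -/
def le (Δ₁ Δ₂ : Seg) : Prop := Δ₁.1 < Δ₂.1 ∨ (Δ₁.1 = Δ₂.1 ∧ Δ₂.2 ≤ Δ₁.2)

end Seg

/-- Labels `≤0`, `=0`, `≥0` for labeled segments. -/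
inductive Label
  | le0 | eq0 | ge0
deriving DecidableEq

/-- Numerical index of a label, used to order the labels `≤0 < =0 < ≥0`. -/
def Label.idx : Label → ℕ
  | .le0 => 0
  | .eq0 => 1
  | .ge0 => 2

/-- A labeled segment: a segment together with a label. -/
abbrev LSeg := Seg × Label

namespace LSeg

/-- The order `⪯` on labeled segments: segments labeled `≤0` precede those labeled `=0`,
which precede those labeled `≥0`; for equal labels `≥0` or `≤0` one compares the segments,
and for label `=0` one compares the ends. -/
def le (Λ₁ Λ₂ : LSeg) : Prop :=
  Λ₁.2.idx < Λ₂.2.idx ∨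
    (Λ₁.2 = Λ₂.2 ∧
      if Λ₁.2 = Label.eq0 then Λ₁.1.2 ≤ Λ₂.1.2 else Seg.le Λ₁.1 Λ₂.1)

/-- The strict order `≺` on labeled segments. -/
def lt (Λ₁ Λ₂ : LSeg) : Prop := LSeg.le Λ₁ Λ₂ ∧ Λ₁ ≠ Λ₂

/-- The contragredient of a labeled segment: for a centered segment the label `≤0`
becomes `≥0` and the labels `=0`, `≥0` are kept; for a non-centered segment the
label is flipped. -/
def dual (Λ : LSeg) : LSeg :=
  (Seg.dual Λ.1,
    if Λ.1.1 + Λ.1.2 = 0 then (if Λ.2 = Label.le0 then Label.ge0 else Λ.2)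
    else
      match Λ.2 with
      | Label.le0 => Label.ge0
      | Label.eq0 => Label.eq0
      | Label.ge0 => Label.le0)

end LSeg

/-- The forced label of a non-centered segment. -/
def forcedLabel (Δ : Seg) : Label := if 0 < Δ.1 + Δ.2 then Label.ge0 else Label.le0

/-- The labeling `s(𝔪)` of a multisegment: each non-centered segment gets its forced
label; a centered segment of multiplicity `m` contributes `⌊m/2⌋` copies labeled `≤0`,
`⌊m/2⌋` copies labeled `≥0`, and `m − 2⌊m/2⌋` copies labeled `=0`. -/
def smap (m : Multiset Seg) : Multiset LSeg :=
  (m.filter fun Δ => ¬ Δ.1 + Δ.2 = 0).map (fun Δ => (Δ, forcedLabel Δ)) +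
    (m.toFinset.filter fun Δ => Δ.1 + Δ.2 = 0).val.bind (fun Δ =>
      Multiset.replicate (m.count Δ / 2) (Δ, Label.le0) +
        Multiset.replicate (m.count Δ / 2) (Δ, Label.ge0) +
        Multiset.replicate (m.count Δ % 2) (Δ, Label.eq0))

/-- A labeled segment is special (the initial sequence stops there): `[0,0]` labeled
`≥0` or `=0` in the integer case; `[1/2,1/2]`, or `[−1/2,1/2]` labeled `≥0` or `=0`
with `ε([−1/2,1/2]) = −1`, in the half-integer case. -/
def Special (ε : Seg → ℤ) (Λ : LSeg) : Prop :=
  (Λ.1 = ((0 : ℤ), (0 : ℤ)) ∧ (Λ.2 = Label.ge0 ∨ Λ.2 = Label.eq0)) ∨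
    Λ.1 = ((1 : ℤ), (1 : ℤ)) ∨
      (Λ.1 = ((-1 : ℤ), (1 : ℤ)) ∧ (Λ.2 = Label.ge0 ∨ Λ.2 = Label.eq0) ∧ ε (-1, 1) = -1)

instance (ε : Seg → ℤ) (Λ : LSeg) : Decidable (Special ε Λ) := by
  unfold Special; infer_instance

/-- The condition for `next` to be a successor of `cur` in the initial sequence:
`next ≺ cur`, `e(next) = e(cur) − 1`, and opposite signs when both are centered. -/
def Succ (ε : Seg → ℤ) (cur next : LSeg) : Prop :=
  LSeg.lt next cur ∧ next.1.2 = cur.1.2 - 2 ∧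
    (cur.1.1 + cur.1.2 = 0 → next.1.1 + next.1.2 = 0 → ε next.1 = - ε cur.1)

/-- `Δ 1, …, Δ l` is the initial sequence in the algorithm for `(m, ε)`:
`Δ 1` is the `⪯`-largest element of `s(m)` with maximal end; recursively,
`Δ (j+1)` is the `⪯`-largest successor of `Δ j`; the sequence stops when the
current segment is special or no successor exists. -/
structure IsInitSeq (m : Multiset Seg) (ε : Seg → ℤ) (Δ : ℕ → LSeg) (l : ℕ) : Prop where
  one_le : 1 ≤ l
  mem : ∀ j, 1 ≤ j → j ≤ l → Δ j ∈ smap m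
  first_max_end : ∀ Λ ∈ smap m, Λ.1.2 ≤ (Δ 1).1.2
  first_max : ∀ Λ ∈ smap m, Λ.1.2 = (Δ 1).1.2 → LSeg.le Λ (Δ 1)
  not_special : ∀ j, 1 ≤ j → j < l → ¬ Special ε (Δ j)
  succ : ∀ j, 1 ≤ j → j < l → Succ ε (Δ j) (Δ (j + 1))
  succ_max : ∀ j, 1 ≤ j → j < l → ∀ Λ ∈ smap m, Succ ε (Δ j) Λ → LSeg.le Λ (Δ (j + 1))
  last : Special ε (Δ l) ∨ ∀ Λ ∈ smap m, ¬ Succ ε (Δ l) Λ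

/-- The sign `ε₀`: `−1` if the sequence stopped at a special segment, `1` otherwise. -/
def eps0 (ε : Seg → ℤ) (Δ : ℕ → LSeg) (l : ℕ) : ℤ :=
  if Special ε (Δ l) then -1 else 1

/-- The number `n₀` of centered segments of `m`. -/
def nCentered (m : Multiset Seg) : ℕ := (m.filter fun Δ => Δ.1 + Δ.2 = 0).card

/-- The sign `ε₁` of the centered segment `𝔪₁` in the case `ε₀ = −1`:
`(−1)^(n₀+1)·ε([0,0])` in the integer case, `(−1)^(n₀)` in the half-integer case. -/
def epsOne (m : Multiset Seg) (ε : Seg → ℤ) (Δ : ℕ → LSeg) : ℤ :=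
  if (Δ 1).1.2 % 2 = 0 then (-1) ^ (nCentered m + 1) * ε (0, 0)
  else (-1) ^ nCentered m

/-- The signed multisegment `𝔪₁`: if `ε₀ = −1` it is the centered segment
`[−e(Δ₁), e(Δ₁)]` with sign `ε₁`; otherwise it is
`[e(Δ_l), e(Δ₁)] + [−e(Δ₁), −e(Δ_l)]` (non-centered segments carry sign `1`). -/
def mOne (m : Multiset Seg) (ε : Seg → ℤ) (Δ : ℕ → LSeg) (l : ℕ) : Multiset (Seg × ℤ) :=
  if Special ε (Δ l) then {((-(Δ 1).1.2, (Δ 1).1.2), epsOne m ε Δ)}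
  else {(((Δ l).1.2, (Δ 1).1.2), 1), ((-(Δ 1).1.2, -(Δ l).1.2), 1)}

/-- The labeled copies `Δ 1, …, Δ l` whose end gets removed. -/
def DEnd (Δ : ℕ → LSeg) (l : ℕ) : Multiset LSeg := (Finset.Icc 1 l).val.map Δ

/-- The labeled copies (the contragredients of the `Δ j`) whose beginning gets removed. -/
def DBeg (Δ : ℕ → LSeg) (l : ℕ) : Multiset LSeg := (DEnd Δ l).map LSeg.dual

/-- The labeled copies trimmed on both sides. -/
def DBoth (Δ : ℕ → LSeg) (l : ℕ) : Multiset LSeg := DEnd Δ l ∩ DBeg Δ l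

/-- The multisegment `𝔪#`: remove the ends of the `Δ j` and the beginnings of their
contragredients (one labeled copy each, both trims if the copy occurs in both lists),
keep all other copies, and discard empty segments. -/
def mHash (m : Multiset Seg) (Δ : ℕ → LSeg) (l : ℕ) : Multiset Seg :=
  (smap m - DEnd Δ l - (DBeg Δ l - DBoth Δ l)).map Prod.fst +
    ((DBoth Δ l).map (fun Λ => ((Λ.1.1 + 2, Λ.1.2 - 2) : Seg)) +
        (DEnd Δ l - DBoth Δ l).map (fun Λ => ((Λ.1.1, Λ.1.2 - 2) : Seg)) +
        (DBeg Δ l - DBoth Δ l).map (fun Λ => ((Λ.1.1 + 2, Λ.1.2) : Seg))).filter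
      fun Δ0 => Δ0.1 ≤ Δ0.2

/-- The trimmed segment `Λ_{i_j}#` obtained from `Δ j`. -/
def trimAt (Δ : ℕ → LSeg) (l : ℕ) (j : ℕ) : Seg :=
  if Δ j ∈ DBeg Δ l then ((Δ j).1.1 + 2, (Δ j).1.2 - 2)
  else ((Δ j).1.1, (Δ j).1.2 - 2)

/-- The sign function `ε#` on (centered) segments of `𝔪#`. -/
def epsHash (m : Multiset Seg) (ε : Seg → ℤ) (Δ : ℕ → LSeg) (l : ℕ) : Seg → ℤ :=
  fun Δ0 =>
    if ∃ j ∈ Finset.Icc 1 l, ((Δ j).1.1 + (Δ j).1.2 = 0 ∧ trimAt Δ l j = Δ0) then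
      eps0 ε Δ l * ε (Δ0.1 - 2, Δ0.2 + 2)
    else if ∃ j ∈ Finset.Icc 1 l,
        ((Δ j).1.1 + (Δ j).1.2 = 2 ∧ trimAt Δ l j = Δ0 ∧ Δ0 ∉ m) then
      eps0 ε Δ l
    else if ∃ j ∈ Finset.Icc 1 l,
        ((Δ j).1.1 + (Δ j).1.2 = 2 ∧ trimAt Δ l j = Δ0 ∧ Δ0 ∈ m) then
      -(eps0 ε Δ l) * ε Δ0
    else eps0 ε Δ l * ε Δ0

/-- The good-parity duality algorithm `AD`, as a relation between the input `(m, ε)`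
and the output signed multisegment: `AD(0) = 0` and
`AD(𝔪, ε) = (𝔪₁, ε₁) + AD(𝔪#, ε#)`. -/
inductive IsAD : Multiset Seg → (Seg → ℤ) → Multiset (Seg × ℤ) → Prop
  | zero (ε : Seg → ℤ) : IsAD 0 ε 0
  | step {m : Multiset Seg} {ε : Seg → ℤ} {Δ : ℕ → LSeg} {l : ℕ} {d : Multiset (Seg × ℤ)}
      (hm : m ≠ 0) (hseq : IsInitSeq m ε Δ l)
      (hrec : IsAD (mHash m Δ l) (epsHash m ε Δ l) d) :
      IsAD m ε (mOne m ε Δ l + d)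

/-- A valid signed symmetric multisegment in the good-parity setting. -/
structure GoodInput (m : Multiset Seg) (ε : Seg → ℤ) : Prop where
  wf : ∀ Δ0 ∈ m, Seg.WF Δ0
  symm : m.map Seg.dual = m
  parity : ∀ Δ₁ ∈ m, ∀ Δ₂ ∈ m, Δ₁.2 % 2 = Δ₂.2 % 2
  sign : ∀ Δ0, ε Δ0 = 1 ∨ ε Δ0 = -1


section Aux

open Multiset

lemma mem_smap_facts {M : Multiset Seg} {Λ : LSeg} (h : Λ ∈ smap M) :
    Λ.1 ∈ M ∧ (Λ.2 = Label.ge0 → 0 ≤ Λ.1.1 + Λ.1.2) ∧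
      (Λ.2 = Label.le0 → Λ.1.1 + Λ.1.2 ≤ 0) ∧ (Λ.2 = Label.eq0 → Λ.1.1 + Λ.1.2 = 0) := by
  unfold smap at h
  rw [Multiset.mem_add] at h
  rcases h with h | h
  · rw [Multiset.mem_map] at h
    obtain ⟨Δ0, hΔ0, rfl⟩ := h
    rw [Multiset.mem_filter] at hΔ0
    refine ⟨hΔ0.1, ?_, ?_, ?_⟩ <;> simp only [forcedLabel] <;> split <;>
      simp_all <;> omega
  · rw [Multiset.mem_bind] at h
    obtain ⟨Δ0, hΔ0, hrep⟩ := h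
    rw [Finset.mem_val, Finset.mem_filter, Multiset.mem_toFinset] at hΔ0
    simp only [Multiset.mem_add, Multiset.mem_replicate] at hrep
    rcases hrep with (⟨-, rfl⟩ | ⟨-, rfl⟩) | ⟨-, rfl⟩ <;>
      exact ⟨hΔ0.1, by simp [hΔ0.2], by simp [hΔ0.2], by simp [hΔ0.2]⟩

lemma smap_eq0_odd {M : Multiset Seg} {s₀ : Seg} (h : (s₀, Label.eq0) ∈ smap M) :
    M.count s₀ % 2 = 1 := by
  unfold smap at h
  rw [Multiset.mem_add] at h
  rcases h with h | h
  · rw [Multiset.mem_map] at h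
    obtain ⟨Δ0, hΔ0, heq⟩ := h
    have : forcedLabel Δ0 = Label.eq0 := congrArg Prod.snd heq
    unfold forcedLabel at this
    split at this <;> simp_all
  · rw [Multiset.mem_bind] at h
    obtain ⟨Δ0, hΔ0, hrep⟩ := h
    simp only [Multiset.mem_add, Multiset.mem_replicate, Prod.mk.injEq] at hrep
    rcases hrep with (⟨-, -, h2⟩ | ⟨-, -, h2⟩) | ⟨hn, h1, -⟩
    · exact absurd h2 (by simp)
    · exact absurd h2 (by simp)
    · subst h1; omega

lemma smap_count_centered {M : Multiset Seg} {s₀ : Seg} (hs : s₀.1 + s₀.2 = 0)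
    (hm : s₀ ∈ M) :
    (smap M).count (s₀, Label.le0) = M.count s₀ / 2 ∧
    (smap M).count (s₀, Label.ge0) = M.count s₀ / 2 ∧
    (smap M).count (s₀, Label.eq0) = M.count s₀ % 2 := by
  have hfirst : ∀ lab : Label,
      ((M.filter fun Δ => ¬ Δ.1 + Δ.2 = 0).map (fun Δ => (Δ, forcedLabel Δ))).count
        (s₀, lab) = 0 := by
    intro lab
    rw [Multiset.count_eq_zero]
    intro hmem
    rw [Multiset.mem_map] at hmem
    obtain ⟨Δ0, hΔ0, heq⟩ := hmem
    rw [Multiset.mem_filter] at hΔ0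
    have : Δ0 = s₀ := (congrArg Prod.fst heq)
    exact hΔ0.2 (this ▸ hs)
  have hF : s₀ ∈ M.toFinset.filter (fun Δ => Δ.1 + Δ.2 = 0) := by
    rw [Finset.mem_filter, Multiset.mem_toFinset]; exact ⟨hm, hs⟩
  have key : ∀ lab : Label,
      (smap M).count (s₀, lab) =
        ((Multiset.replicate (M.count s₀ / 2) ((s₀ : Seg), Label.le0) +
            Multiset.replicate (M.count s₀ / 2) (s₀, Label.ge0) +
            Multiset.replicate (M.count s₀ % 2) (s₀, Label.eq0))).count (s₀, lab) := by
    intro lab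
    unfold smap
    rw [Multiset.count_add, hfirst, Multiset.count_bind, zero_add]
    have : ((M.toFinset.filter fun Δ => Δ.1 + Δ.2 = 0).val.map fun Δ =>
        (Multiset.replicate (M.count Δ / 2) (Δ, Label.le0) +
          Multiset.replicate (M.count Δ / 2) (Δ, Label.ge0) +
          Multiset.replicate (M.count Δ % 2) (Δ, Label.eq0)).count (s₀, lab)).sum =
        ∑ Δ0 ∈ (M.toFinset.filter fun Δ => Δ.1 + Δ.2 = 0),
          (Multiset.replicate (M.count Δ0 / 2) (Δ0, Label.le0) +
            Multiset.replicate (M.count Δ0 / 2) (Δ0, Label.ge0) +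
            Multiset.replicate (M.count Δ0 % 2) (Δ0, Label.eq0)).count (s₀, lab) := rfl
    rw [this, Finset.sum_eq_single_of_mem s₀ hF]
    intro Δ0 _ hne
    simp only [Multiset.count_add, Multiset.count_replicate]
    rw [if_neg (fun h => hne (congrArg Prod.fst h)),
      if_neg (fun h => hne (congrArg Prod.fst h)),
      if_neg (fun h => hne (congrArg Prod.fst h))]
    rfl
  refine ⟨?_, ?_, ?_⟩ <;> rw [key] <;>
    simp [Multiset.count_replicate]

lemma card_filter_fst (s : Multiset LSeg) (s₀ : Seg) :
    (s.filter (fun Λ => s₀ = Λ.1)).card =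
      s.count (s₀, Label.le0) + s.count (s₀, Label.eq0) + s.count (s₀, Label.ge0) := by
  induction s using Multiset.induction_on with
  | empty => simp
  | cons a s ih =>
    obtain ⟨a1, lab⟩ := a
    rw [Multiset.filter_cons, Multiset.card_add, ih]
    by_cases h : s₀ = a1
    · subst h
      cases lab <;> simp [Multiset.count_cons] <;> omega
    · rw [if_neg h]
      have h1 : ((s₀, Label.le0) : LSeg) ≠ (a1, lab) := fun hh => h (congrArg Prod.fst hh)
      have h2 : ((s₀, Label.eq0) : LSeg) ≠ (a1, lab) := fun hh => h (congrArg Prod.fst hh)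
      have h3 : ((s₀, Label.ge0) : LSeg) ≠ (a1, lab) := fun hh => h (congrArg Prod.fst hh)
      simp [Multiset.count_cons, h1, h2, h3]

lemma ends_aux {m : Multiset Seg} {ε : Seg → ℤ} {Δ : ℕ → LSeg} {l : ℕ}
    (hseq : IsInitSeq m ε Δ l) :
    ∀ k : ℕ, 1 + k ≤ l → (Δ (1 + k)).1.2 = (Δ 1).1.2 - 2 * (k : ℤ) := by
  intro k
  induction k with
  | zero => intro _; simp
  | succ n ih =>
    intro h
    have hs := (hseq.succ (1 + n) (by omega) (by omega)).2.1
    have : (1 + n) + 1 = 1 + (n + 1) := by omega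
    rw [this] at hs
    rw [hs, ih (by omega)]
    push_cast; ring

lemma ends_formula {m : Multiset Seg} {ε : Seg → ℤ} {Δ : ℕ → LSeg} {l : ℕ}
    (hseq : IsInitSeq m ε Δ l) {i : ℕ} (h1 : 1 ≤ i) (h2 : i ≤ l) :
    (Δ i).1.2 = (Δ 1).1.2 - 2 * ((i : ℤ) - 1) := by
  obtain ⟨k, rfl⟩ : ∃ k, i = 1 + k := ⟨i - 1, by omega⟩
  rw [ends_aux hseq k (by omega)]
  push_cast; ring

lemma mem_DEnd {Δ : ℕ → LSeg} {l : ℕ} {Λ : LSeg} :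
    Λ ∈ DEnd Δ l ↔ ∃ i, 1 ≤ i ∧ i ≤ l ∧ Δ i = Λ := by
  simp [DEnd, Finset.mem_Icc, and_assoc]

lemma mem_DBeg {Δ : ℕ → LSeg} {l : ℕ} {Λ : LSeg} :
    Λ ∈ DBeg Δ l ↔ ∃ i, 1 ≤ i ∧ i ≤ l ∧ LSeg.dual (Δ i) = Λ := by
  rw [DBeg, Multiset.mem_map]
  constructor
  · rintro ⟨x, hx, rfl⟩
    obtain ⟨i, h1, h2, rfl⟩ := mem_DEnd.1 hx
    exact ⟨i, h1, h2, rfl⟩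
  · rintro ⟨i, h1, h2, rfl⟩
    exact ⟨Δ i, mem_DEnd.2 ⟨i, h1, h2, rfl⟩, rfl⟩

lemma count_DEnd (Δ : ℕ → LSeg) (l : ℕ) (Λ : LSeg) :
    (DEnd Δ l).count Λ = ((Finset.Icc 1 l).filter (fun i => Λ = Δ i)).card := by
  rw [DEnd, Multiset.count_map]; rfl

lemma count_DBeg (Δ : ℕ → LSeg) (l : ℕ) (Λ : LSeg) :
    (DBeg Δ l).count Λ =
      ((Finset.Icc 1 l).filter (fun i => Λ = LSeg.dual (Δ i))).card := by
  rw [DBeg, DEnd, Multiset.map_map, Multiset.count_map]; rfl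

lemma filter_Icc_singleton {p : ℕ → Prop} [DecidablePred p] {a b i₀ : ℕ}
    (h1 : a ≤ i₀) (h2 : i₀ ≤ b) (h3 : p i₀)
    (h : ∀ i, a ≤ i → i ≤ b → p i → i = i₀) :
    (Finset.Icc a b).filter p = {i₀} := by
  ext x
  simp only [Finset.mem_filter, Finset.mem_Icc, Finset.mem_singleton]
  constructor
  · rintro ⟨⟨hx1, hx2⟩, hx3⟩; exact h x hx1 hx2 hx3
  · rintro rfl; exact ⟨⟨h1, h2⟩, h3⟩

lemma filter_Icc_empty {p : ℕ → Prop} [DecidablePred p] {a b : ℕ}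
    (h : ∀ i, a ≤ i → i ≤ b → ¬ p i) :
    (Finset.Icc a b).filter p = ∅ := by
  ext x
  simp only [Finset.mem_filter, Finset.mem_Icc, Finset.notMem_empty, iff_false, not_and]
  rintro ⟨hx1, hx2⟩; exact h x hx1 hx2

lemma trimAt_snd (Δ : ℕ → LSeg) (l i : ℕ) : (trimAt Δ l i).2 = (Δ i).1.2 - 2 := by
  unfold trimAt; split <;> rfl

lemma dual_self {Λ : LSeg} (hc : Λ.1.1 + Λ.1.2 = 0) (hl : Λ.2 ≠ Label.le0) :
    LSeg.dual Λ = Λ := by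
  unfold LSeg.dual Seg.dual
  rw [if_pos hc, if_neg hl]
  have : (-Λ.1.2, -Λ.1.1) = Λ.1 := by
    apply Prod.ext <;> simp <;> omega
  rw [this]

end Aux

/-- Lemma 6.0.3: with `Δ'` the initial sequence of `(𝔪#, ε#)`,
assume `e(Δ₁) = e(Δ'₁)`; if `1 ≤ j ≤ l`, `j < l'`, `c(Δ_j) = 0` and `Δ'_i ⪯ Δ_i`
for all `i ≤ j`, then `c(Δ'_{j+1}) ≠ 0`. -/
theorem stmt2 (m : Multiset Seg) (ε : Seg → ℤ) (hgood : GoodInput m ε) (hne : m ≠ 0)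
    (Δ : ℕ → LSeg) (l : ℕ) (hseq : IsInitSeq m ε Δ l)
    (Δ' : ℕ → LSeg) (l' : ℕ) (hne' : mHash m Δ l ≠ 0)
    (hseq' : IsInitSeq (mHash m Δ l) (epsHash m ε Δ l) Δ' l')
    (hE : (Δ 1).1.2 = (Δ' 1).1.2)
    (j : ℕ) (hj1 : 1 ≤ j) (hjl : j ≤ l) (hjl' : j < l')
    (hcj : (Δ j).1.1 + (Δ j).1.2 = 0)
    (hall : ∀ i, 1 ≤ i → i ≤ j → LSeg.le (Δ' i) (Δ i)) :
    (Δ' (j + 1)).1.1 + (Δ' (j + 1)).1.2 ≠ 0 := by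
  intro hc'
  have hEnd : ∀ i : ℕ, 1 ≤ i → i ≤ l → (Δ i).1.2 = (Δ 1).1.2 - 2 * ((i : ℤ) - 1) :=
    fun i h1 h2 => ends_formula hseq h1 h2
  have hEnd' : ∀ i : ℕ, 1 ≤ i → i ≤ l' → (Δ' i).1.2 = (Δ 1).1.2 - 2 * ((i : ℤ) - 1) :=
    fun i h1 h2 => by rw [ends_formula hseq' h1 h2, ← hE]
  have key : ∀ i : ℕ, 1 ≤ i → i ≤ j → (Δ i).1.1 + (Δ i).1.2 = 0 →
      (Δ' (i + 1)).1.1 + (Δ' (i + 1)).1.2 = 0 → False := by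
    intro i
    induction i using Nat.strong_induction_on with
    | _ i IH =>
    intro hi1 hij hci hci'
    have hil : i ≤ l := le_trans hij hjl
    have hil' : i < l' := lt_of_le_of_lt hij hjl'
    set e : ℤ := (Δ i).1.2 with he
    have hΔi : Δ i ∈ smap m := hseq.mem i hi1 hil
    have hΔ'i : Δ' i ∈ smap (mHash m Δ l) := hseq'.mem i hi1 (le_of_lt hil')
    have he' : (Δ' i).1.2 = e := by
      rw [hEnd' i hi1 (le_of_lt hil'), he, hEnd i hi1 hil]
    have hsucc' := hseq'.succ i hi1 hil'
    have he1' : (Δ' (i + 1)).1.2 = e - 2 := by rw [hsucc'.2.1, he']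
    have hseg_i : (Δ i).1 = (-e, e) := Prod.ext (by omega) rfl
    have hfacts'i := mem_smap_facts hΔ'i
    have hfactsi := mem_smap_facts hΔi
    have hle' : LSeg.le (Δ' i) (Δ i) := hall i hi1 hij
    -- Step O : the shape of Δ' i
    have hO : (Δ' i).1.1 = -e ∧ (Δ' i).2 ≠ Label.le0 ∧ (Δ i).2 ≠ Label.le0 := by
      have hlt := hsucc'.1.1
      rcases hL' : (Δ' i).2 with _ | _ | _
      · -- L' = le0 : impossible
        exfalso
        have hμ : (Δ' (i + 1)).2 = Label.le0 := by
          rcases hlt with h | h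
          · rw [hL'] at h; cases hμ' : (Δ' (i + 1)).2 <;> rw [hμ'] at h <;>
              simp [Label.idx] at h
          · rw [← hL']; exact h.1
        have hsum1 : (Δ' (i + 1)).1.1 + (Δ' (i + 1)).1.2 ≤ 0 :=
          (mem_smap_facts (hseq'.mem (i + 1) (by omega) hil')).2.2.1 hμ
        have hsum2 : (Δ' i).1.1 + (Δ' i).1.2 ≤ 0 := hfacts'i.2.2.1 hL'
        rcases hlt with h | ⟨-, hif⟩
        · rw [hL', hμ] at h; simp [Label.idx] at h
        · rw [hμ] at hif
          rw [if_neg (by simp)] at hif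
          rcases hif with h | ⟨h1, h2⟩ <;> omega
      · -- L' = eq0
        have hsum : (Δ' i).1.1 + (Δ' i).1.2 = 0 := hfacts'i.2.2.2 hL'
        refine ⟨by omega, by simp, ?_⟩
        intro hL
        rcases hle' with h | h
        · rw [hL', hL] at h; simp [Label.idx] at h
        · rw [hL', hL] at h; simp at h
      · -- L' = ge0
        have hsum : 0 ≤ (Δ' i).1.1 + (Δ' i).1.2 := hfacts'i.2.1 hL'
        have hge : (Δ i).2 = Label.ge0 := by
          rcases hle' with h | h
          · rw [hL'] at h; cases hL : (Δ i).2 <;> rw [hL] at h <;>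
              simp [Label.idx] at h
          · rw [← h.1, hL']
        rcases hle' with h | ⟨-, hif⟩
        · rw [hL', hge] at h; simp [Label.idx] at h
        · rw [hL'] at hif
          rw [if_neg (by simp)] at hif
          have hb : (Δ' i).1.1 ≤ (Δ i).1.1 := by
            rcases hif with h | ⟨h1, -⟩ <;> omega
          rw [hseg_i] at hb
          have hb2 : (Δ' i).1.1 ≤ -e := hb
          refine ⟨by omega, by simp, by rw [hge]; simp⟩
    have hseg' : (Δ' i).1 = (-e, e) := Prod.ext hO.1 he'
    -- Step D : Δ i is in DBeg and trims on both sides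
    have hdual : LSeg.dual (Δ i) = Δ i := dual_self hci hO.2.2
    have hDBeg : Δ i ∈ DBeg Δ l := mem_DBeg.2 ⟨i, hi1, hil, hdual⟩
    have htrim : trimAt Δ l i = (2 - e, e - 2) := by
      unfold trimAt
      rw [if_pos hDBeg, hseg_i]
      exact Prod.ext (by ring) rfl
    by_cases hrec : 2 ≤ i ∧ (Δ (i - 1)).1.1 + (Δ (i - 1)).1.2 = 0
    · -- recurse
      refine IH (i - 1) (by omega) (by omega) (by omega) hrec.2 ?_
      have : i - 1 + 1 = i := by omega
      rw [this, hseg']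
      ring
    push_neg at hrec
    by_cases hB2 : 2 ≤ i ∧ (Δ (i - 1)).1 = (-e, e + 2)
    · -- case B2 : counting contradiction
      obtain ⟨h2i, hB2seg⟩ := hB2
      have hΔi1 : Δ (i - 1) ∈ smap m := hseq.mem (i - 1) (by omega) (by omega)
      have hfi1 := mem_smap_facts hΔi1
      have hL1 : (Δ (i - 1)).2 = Label.ge0 := by
        cases hx : (Δ (i - 1)).2 with
        | le0 =>
          exfalso
          have h' := hfi1.2.2.1 hx
          rw [hB2seg] at h'
          have h'' : -e + (e + 2) ≤ 0 := h'
          omega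
        | eq0 =>
          exfalso
          have h' := hfi1.2.2.2 hx
          rw [hB2seg] at h'
          have h'' : -e + (e + 2) = 0 := h'
          omega
        | ge0 => rfl
      have hsm := hseq.succ (i - 1) (by omega) (by omega)
      have hii : i - 1 + 1 = i := by omega
      rw [hii] at hsm
      have hLi : (Δ i).2 = Label.eq0 := by
        rcases hsm.1.1 with h | ⟨h1, hif⟩
        · rw [hL1] at h
          cases hx : (Δ i).2 with
          | le0 => exact absurd hx hO.2.2
          | eq0 => rfl
          | ge0 => exfalso; rw [hx] at h; simp [Label.idx] at h
        · exfalso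
          rw [hL1] at h1
          rw [if_neg (by rw [h1]; simp)] at hif
          rw [hseg_i, hB2seg] at hif
          rcases hif with h | h
          · have h' : (-e : ℤ) < -e := h
            omega
          · have h' : (e : ℤ) + 2 ≤ e := h.2
            omega
      have hL'i : (Δ' i).2 = Label.eq0 := by
        rcases hle' with h | h
        · rw [hLi] at h
          cases hx : (Δ' i).2 with
          | le0 => exact absurd hx hO.2.1
          | eq0 => rfl
          | ge0 => exfalso; rw [hx] at h; simp [Label.idx] at h
        · rw [h.1, hLi]
      have hDi : Δ i = ((-e, e), Label.eq0) := Prod.ext hseg_i hLi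
      have hD'i : Δ' i = ((-e, e), Label.eq0) := Prod.ext hseg' hL'i
      have hDi1 : Δ (i - 1) = ((-e, e + 2), Label.ge0) := Prod.ext hB2seg hL1
      have hcodd : m.count (-e, e) % 2 = 1 :=
        smap_eq0_odd (by rw [← hDi]; exact hΔi)
      have hcodd' : (mHash m Δ l).count (-e, e) % 2 = 1 :=
        smap_eq0_odd (by rw [← hD'i]; exact hΔ'i)
      have hbase : e = (Δ 1).1.2 - 2 * ((i : ℤ) - 1) := by rw [he]; exact hEnd i hi1 hil
      have huniqe : ∀ i' : ℕ, 1 ≤ i' → i' ≤ l → (Δ i').1.2 = e → i' = i := by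
        intro i' h1 h2 h3
        have h4 := hEnd i' h1 h2
        omega
      have huniqe2 : ∀ i' : ℕ, 1 ≤ i' → i' ≤ l → (Δ i').1.2 = e + 2 → i' = i - 1 := by
        intro i' h1 h2 h3
        have h4 := hEnd i' h1 h2
        omega
      have hcntDEnd : ∀ lab : Label,
          (DEnd Δ l).count ((-e, e), lab) = if lab = Label.eq0 then 1 else 0 := by
        intro lab
        rw [count_DEnd]
        by_cases hlab : lab = Label.eq0
        · subst hlab
          rw [if_pos rfl, filter_Icc_singleton hi1 hil hDi.symm ?_, Finset.card_singleton]
          intro i'' ha hb hp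
          exact huniqe i'' ha hb (congrArg (fun x => x.1.2) hp).symm
        · rw [if_neg hlab, filter_Icc_empty ?_, Finset.card_empty]
          intro i'' ha hb hp
          have h5 := huniqe i'' ha hb (congrArg (fun x => x.1.2) hp).symm
          subst h5
          rw [hDi] at hp
          exact hlab (congrArg Prod.snd hp)
      have hcntDBeg : ∀ lab : Label,
          (DBeg Δ l).count ((-e, e), lab) = if lab = Label.eq0 then 1 else 0 := by
        intro lab
        rw [count_DBeg]
        have hkey : ∀ i'', 1 ≤ i'' → i'' ≤ l →
            (((-e, e), lab) : LSeg) = LSeg.dual (Δ i'') → i'' = i := by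
          intro i'' ha hb hp
          have h5 : -e = -(Δ i'').1.2 := congrArg (fun x => x.1.1) hp
          exact huniqe i'' ha hb (by omega)
        by_cases hlab : lab = Label.eq0
        · subst hlab
          rw [if_pos rfl, filter_Icc_singleton hi1 hil ?_ hkey, Finset.card_singleton]
          rw [hdual, hDi]
        · rw [if_neg hlab, filter_Icc_empty ?_, Finset.card_empty]
          intro i'' ha hb hp
          have h5 := hkey i'' ha hb hp
          subst h5
          rw [hdual, hDi] at hp
          exact hlab (congrArg Prod.snd hp)
      have hcntDBoth : ∀ lab : Label,
          (DBoth Δ l).count ((-e, e), lab) = if lab = Label.eq0 then 1 else 0 := by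
        intro lab
        rw [DBoth, Multiset.count_inter, hcntDEnd, hcntDBeg]
        split <;> simp
      have hsum0 : ((-e, e) : Seg).1 + ((-e, e) : Seg).2 = 0 := by simp
      have hmem0 : ((-e, e) : Seg) ∈ m := by rw [← hseg_i]; exact hfactsi.1
      have hscnt := smap_count_centered hsum0 hmem0
      have hXle : (smap m - DEnd Δ l - (DBeg Δ l - DBoth Δ l)).count ((-e, e), Label.le0)
          = m.count (-e, e) / 2 := by
        rw [Multiset.count_sub, Multiset.count_sub, Multiset.count_sub,
          hscnt.1, hcntDEnd, hcntDBeg, hcntDBoth]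
        simp
      have hXge : (smap m - DEnd Δ l - (DBeg Δ l - DBoth Δ l)).count ((-e, e), Label.ge0)
          = m.count (-e, e) / 2 := by
        rw [Multiset.count_sub, Multiset.count_sub, Multiset.count_sub,
          hscnt.2.1, hcntDEnd, hcntDBeg, hcntDBoth]
        simp
      have hXeq : (smap m - DEnd Δ l - (DBeg Δ l - DBoth Δ l)).count ((-e, e), Label.eq0)
          = 0 := by
        rw [Multiset.count_sub, Multiset.count_sub, Multiset.count_sub,
          hscnt.2.2, hcntDEnd, hcntDBeg, hcntDBoth, hcodd]
        simp
      have hU : (((smap m - DEnd Δ l - (DBeg Δ l - DBoth Δ l)).map Prod.fst)).count (-e, e)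
          = m.count (-e, e) / 2 + m.count (-e, e) / 2 := by
        rw [Multiset.count_map, card_filter_fst, hXle, hXeq, hXge]
        omega
      have hp2 : ((DBoth Δ l).map (fun Λ => ((Λ.1.1 + 2, Λ.1.2 - 2) : Seg))).count (-e, e)
          = 0 := by
        rw [Multiset.count_map, Multiset.card_eq_zero, Multiset.filter_eq_nil]
        intro Λ hΛ hp
        rw [DBoth] at hΛ
        obtain ⟨i'', ha, hb, hΛeq⟩ := mem_DEnd.1 (Multiset.mem_inter.1 hΛ).1
        rw [← hΛeq] at hp
        have h5 : e = (Δ i'').1.2 - 2 := congrArg Prod.snd hp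
        have h6 := huniqe2 i'' ha hb (by omega)
        rw [h6, hDi1] at hp
        have h7 : -e = -e + 2 := congrArg Prod.fst hp
        omega
      have hfDEnd : Multiset.filter (fun Λ => ((-e, e) : Seg) = (Λ.1.1, Λ.1.2 - 2))
          (DEnd Δ l) = {Δ (i - 1)} := by
        rw [DEnd, Multiset.filter_map]
        have h9 : Multiset.filter ((fun Λ => ((-e, e) : Seg) = (Λ.1.1, Λ.1.2 - 2)) ∘ Δ)
            (Finset.Icc 1 l).val
            = (Finset.filter (fun i'' => ((-e, e) : Seg) = ((Δ i'').1.1, (Δ i'').1.2 - 2))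
                (Finset.Icc 1 l)).val := rfl
        rw [h9, filter_Icc_singleton (i₀ := i - 1) (by omega) (by omega) ?_ ?_]
        · simp
        · rw [hDi1]; norm_num
        · intro i'' ha hb hp
          have h5 : e = (Δ i'').1.2 - 2 := congrArg Prod.snd hp
          exact huniqe2 i'' ha hb (by omega)
      have hfDBoth0 : Multiset.filter (fun Λ => ((-e, e) : Seg) = (Λ.1.1, Λ.1.2 - 2))
          (DBoth Δ l) = 0 := by
        rw [Multiset.filter_eq_nil]
        intro Λ hΛ hp
        rw [DBoth] at hΛ
        have hmm := Multiset.mem_inter.1 hΛ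
        obtain ⟨i'', ha, hb, hΛeq⟩ := mem_DEnd.1 hmm.1
        rw [← hΛeq] at hp
        have h5 : e = (Δ i'').1.2 - 2 := congrArg Prod.snd hp
        have h6 := huniqe2 i'' ha hb (by omega)
        rw [← hΛeq, h6] at hmm
        obtain ⟨i₃, hc3, hd3, h3⟩ := mem_DBeg.1 hmm.2
        have h7 : -(Δ i₃).1.2 = (Δ (i - 1)).1.1 := congrArg (fun x => x.1.1) h3
        rw [hDi1] at h7
        have h7' : -(Δ i₃).1.2 = -e := h7
        have h8 := huniqe i₃ hc3 hd3 (by omega)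
        rw [h8, hdual, hDi, hDi1] at h3
        have h10 : Label.eq0 = Label.ge0 := congrArg Prod.snd h3
        exact absurd h10 (by simp)
      have hp0 : ((DEnd Δ l - DBoth Δ l).map (fun Λ => ((Λ.1.1, Λ.1.2 - 2) : Seg))).count
          (-e, e) = 1 := by
        rw [Multiset.count_map, Multiset.filter_sub, hfDEnd, hfDBoth0]
        simp
      have hfDBeg : Multiset.filter (fun Λ => ((-e, e) : Seg) = (Λ.1.1 + 2, Λ.1.2))
          (DBeg Δ l) = {LSeg.dual (Δ (i - 1))} := by
        rw [DBeg, DEnd, Multiset.map_map, Multiset.filter_map]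
        have h9 : Multiset.filter ((fun Λ => ((-e, e) : Seg) = (Λ.1.1 + 2, Λ.1.2)) ∘
              (LSeg.dual ∘ Δ)) (Finset.Icc 1 l).val
            = (Finset.filter (fun i'' => ((-e, e) : Seg) =
                ((LSeg.dual (Δ i'')).1.1 + 2, (LSeg.dual (Δ i'')).1.2))
                (Finset.Icc 1 l)).val := rfl
        rw [h9, filter_Icc_singleton (i₀ := i - 1) (by omega) (by omega) ?_ ?_]
        · simp
        · rw [hDi1]
          rw [Prod.ext_iff]
          constructor
          · have h11 : (LSeg.dual (((-e, e + 2), Label.ge0) : LSeg)).1.1 = -(e + 2) := rfl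
            show -e = (LSeg.dual (((-e, e + 2), Label.ge0) : LSeg)).1.1 + 2
            rw [h11]; ring
          · have h12 : (LSeg.dual (((-e, e + 2), Label.ge0) : LSeg)).1.2 = -(-e) := rfl
            show e = (LSeg.dual (((-e, e + 2), Label.ge0) : LSeg)).1.2
            rw [h12]; ring
        · intro i'' ha hb hp
          have h5 : -e = -(Δ i'').1.2 + 2 := congrArg Prod.fst hp
          exact huniqe2 i'' ha hb (by omega)
      have hfDBoth1 : Multiset.filter (fun Λ => ((-e, e) : Seg) = (Λ.1.1 + 2, Λ.1.2))
          (DBoth Δ l) = 0 := by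
        rw [Multiset.filter_eq_nil]
        intro Λ hΛ hp
        rw [DBoth] at hΛ
        obtain ⟨i'', ha, hb, hΛeq⟩ := mem_DEnd.1 (Multiset.mem_inter.1 hΛ).1
        rw [← hΛeq] at hp
        have h5 : e = (Δ i'').1.2 := (Prod.ext_iff.1 hp).2
        have h6 := huniqe i'' ha hb (by omega)
        rw [h6, hDi] at hp
        have h7 : -e = -e + 2 := congrArg Prod.fst hp
        omega
      have hp1 : ((DBeg Δ l - DBoth Δ l).map (fun Λ => ((Λ.1.1 + 2, Λ.1.2) : Seg))).count
          (-e, e) = 1 := by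
        rw [Multiset.count_map, Multiset.filter_sub, hfDBeg, hfDBoth1]
        simp
      have hwf := hgood.wf (-e, e) hmem0
      have h_ee : ((-e, e) : Seg).1 ≤ ((-e, e) : Seg).2 := hwf.1
      have htot : (mHash m Δ l).count (-e, e)
          = m.count (-e, e) / 2 + m.count (-e, e) / 2 + 2 := by
        rw [mHash, Multiset.count_add, Multiset.count_filter, if_pos h_ee,
          Multiset.count_add, Multiset.count_add, hU, hp2, hp0, hp1]
      rw [htot] at hcodd'
      omega
    push_neg at hB2
    -- case B1 : sign contradiction
    have hC : (Δ' (i + 1)).1 = (2 - e, e - 2) := Prod.ext (by omega) he1'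
    have hepsC : epsHash m ε Δ l (2 - e, e - 2) = eps0 ε Δ l * ε (-e, e) := by
      unfold epsHash
      rw [if_pos ⟨i, Finset.mem_Icc.2 ⟨hi1, hil⟩, hci, htrim⟩]
      have : ((2 : ℤ) - e - 2, e - 2 + 2) = (-e, e) := by norm_num
      rw [this]
    have hend_unique : ∀ i' : ℕ, 1 ≤ i' → i' ≤ l → (Δ i').1.2 = e + 2 →
        i' = i - 1 ∧ 2 ≤ i := by
      intro i' h1 h2 h3
      rw [hEnd i' h1 h2] at h3
      rw [he, hEnd i hi1 hil] at h3
      omega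
    have hepsS : epsHash m ε Δ l (-e, e) = eps0 ε Δ l * ε (-e, e) := by
      unfold epsHash
      rw [if_neg, if_neg, if_neg]
      · rintro ⟨i', hmem, h2, htr, -⟩
        rw [Finset.mem_Icc] at hmem
        have hsnd := trimAt_snd Δ l i'
        rw [htr] at hsnd
        obtain ⟨rfl, h2i⟩ := hend_unique i' hmem.1 hmem.2 (by omega)
        have := hB2 h2i
        apply this
        exact Prod.ext (by omega) (by omega)
      · rintro ⟨i', hmem, h2, htr, -⟩
        rw [Finset.mem_Icc] at hmem
        have hsnd := trimAt_snd Δ l i'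
        rw [htr] at hsnd
        obtain ⟨rfl, h2i⟩ := hend_unique i' hmem.1 hmem.2 (by omega)
        have := hB2 h2i
        apply this
        exact Prod.ext (by omega) (by omega)
      · rintro ⟨i', hmem, h2, htr⟩
        rw [Finset.mem_Icc] at hmem
        have hsnd := trimAt_snd Δ l i'
        rw [htr] at hsnd
        obtain ⟨rfl, h2i⟩ := hend_unique i' hmem.1 hmem.2 (by omega)
        exact hrec h2i h2
    have hsign := hsucc'.2.2 (by rw [hseg']; ring) hci'
    rw [hC, hseg', hepsC, hepsS] at hsign
    have h0 : eps0 ε Δ l = 1 ∨ eps0 ε Δ l = -1 := by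
      unfold eps0; split
      · right; rfl
      · left; rfl
    rcases hgood.sign (-e, e) with hs | hs <;> rcases h0 with h0 | h0 <;>
      rw [hs, h0] at hsign <;> norm_num at hsign
  exact key j hj1 le_rfl hcj hc' 

end AZ
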